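/- (Fundamental Principle of Finite Strategies.) Let β_1, …, β_N : ℝ → ℝ be continuous nonnegative functions and let β_1⁰, …, β_N⁰ > 0 and t_F ∈ ℝ be such that β_i(t) = β_i⁰ for all t ≥ t_F and all i (a finite control strategy). Suppose S, E, I_1, …, I_N : ℝ → ℝ are differentiable, nonnegative, and satisfy for all t the time-dependent SEIR system S'(t) = −(Σ_i β_i(t) I_i(t)) S(t), E'(t) = (Σ_i β_i(t) I_i(t)) S(t) − σ E(t), I_i'(t) = x_i σ E(t) − γ_i I_i(t). If E(t_F) + Σ_i I_i(t_F) > 0, then S(t) converges as t → ∞ to a limit S_∞ satisfying S_∞ < S*₀ = (Σ_i x_i β_i⁰/γ_i)^{-1}. -/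

import Mathlib

open Filter MeasureTheory intervalIntegral Topology

lemma ftc' {f f' : ℝ → ℝ} (h : ∀ t, HasDerivAt f (f' t) t)
    (hc : Continuous f') (a b : ℝ) :
    ∫ s in a..b, f' s = f b - f a :=
  integral_eq_sub_of_hasDerivAt (fun x _ => h x) (hc.intervalIntegrable a b)

lemma mono_int {f : ℝ → ℝ} (hc : Continuous f) (hnn : ∀ t, 0 ≤ f t) (a : ℝ) :
    Monotone (fun t => ∫ s in a..t, f s) := by
  intro b c hbc
  have h1 := integral_add_adjacent_intervals (μ := volume)
    (hc.intervalIntegrable a b) (hc.intervalIntegrable b c)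
  have h2 : (0:ℝ) ≤ ∫ s in b..c, f s :=
    intervalIntegral.integral_nonneg hbc (fun u _ => hnn u)
  simp only
  linarith

lemma lim_zero {f : ℝ → ℝ} (hc : Continuous f) (hnn : ∀ t, 0 ≤ f t)
    {a C : ℝ} (hC : ∀ t, (∫ s in a..t, f s) ≤ C) {l : ℝ}
    (hl : Tendsto f atTop (𝓝 l)) : l = 0 := by
  by_contra hne
  have hl0 : 0 ≤ l := ge_of_tendsto hl (Eventually.of_forall hnn)
  have hlpos : 0 < l := lt_of_le_of_ne hl0 (Ne.symm hne)
  obtain ⟨T, hT⟩ := (eventually_atTop.mp (hl.eventually (eventually_gt_nhds (half_lt_self hlpos))))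
  set T' := max a T with hT'
  set K := ∫ s in a..T', f s with hK
  have hKC : K ≤ C := hC T'
  have key : ∀ t, T' ≤ t → K + l / 2 * (t - T') ≤ C := by
    intro t ht
    have hsplit := integral_add_adjacent_intervals (μ := volume)
      (hc.intervalIntegrable a T') (hc.intervalIntegrable T' t)
    have hlow : l / 2 * (t - T') ≤ ∫ s in T'..t, f s := by
      have h := integral_mono_on (μ := volume) (f := fun _ => l / 2) ht
        intervalIntegrable_const (hc.intervalIntegrable T' t)
        (fun u hu => (hT u (le_trans (le_max_right a T) hu.1)).le)
      rw [intervalIntegral.integral_const, smul_eq_mul] at h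
      linarith [h]
    have := hC t
    linarith
  have hnn2 : (0:ℝ) ≤ (C - K + 1) * (2 / l) := by
    apply mul_nonneg (by linarith) (by positivity)
  have hfin := key (T' + (C - K + 1) * (2 / l)) (by linarith)
  have heq : l / 2 * (T' + (C - K + 1) * (2 / l) - T') = C - K + 1 := by
    field_simp
    ring
  rw [heq] at hfin
  linarith


/-- Fundamental Principle of Finite Strategies: for any finite control
strategy (time-dependent transmission rates `βᵢ(t)` that equal their natural values
`βᵢ⁰` for all `t ≥ t_F`), if the epidemic is not extinct at time `t_F`, then `S(t)`
converges as `t → ∞` to a limit `S_∞ < S*₀ = (Σᵢ xᵢ βᵢ⁰/γᵢ)⁻¹`. -/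
theorem stmt_7
    (N : ℕ) [NeZero N]
    (σ : ℝ) (hσ : 0 < σ)
    (γ x : Fin N → ℝ)
    (hγ : ∀ i, 0 < γ i) (hx : ∀ i, 0 < x i)
    (hxsum : ∑ i, x i = 1)
    (β : Fin N → ℝ → ℝ) (β0 : Fin N → ℝ) (tF : ℝ)
    (hβcont : ∀ i, Continuous (β i))
    (hβnn : ∀ i t, 0 ≤ β i t)
    (hβ0 : ∀ i, 0 < β0 i)
    (hfin : ∀ i, ∀ t ≥ tF, β i t = β0 i)
    (S E : ℝ → ℝ) (I : Fin N → ℝ → ℝ)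
    (hS : ∀ t, HasDerivAt S (-(∑ i, β i t * I i t) * S t) t)
    (hE : ∀ t, HasDerivAt E ((∑ i, β i t * I i t) * S t - σ * E t) t)
    (hI : ∀ i, ∀ t, HasDerivAt (I i) (x i * σ * E t - γ i * I i t) t)
    (hSnn : ∀ t, 0 ≤ S t) (hEnn : ∀ t, 0 ≤ E t)
    (hInn : ∀ i t, 0 ≤ I i t)
    (hpos : 0 < E tF + ∑ i, I i tF) :
    ∃ Sinf : ℝ, Tendsto S atTop (nhds Sinf)
      ∧ Sinf < (∑ i, x i * β0 i / γ i)⁻¹ := by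
  have hN : 0 < N := Nat.pos_of_ne_zero (NeZero.ne N)
  have hUniv : (Finset.univ : Finset (Fin N)).Nonempty := ⟨⟨0, hN⟩, Finset.mem_univ _⟩
  have hQpos : 0 < ∑ i, x i * β0 i / γ i :=
    Finset.sum_pos (fun i _ => by have := hx i; have := hβ0 i; have := hγ i; positivity) hUniv
  set S0 : ℝ := (∑ i, x i * β0 i / γ i)⁻¹ with hS0def
  have hS0 : 0 < S0 := inv_pos.mpr hQpos
  -- continuity
  have hSd : Differentiable ℝ S := fun t => (hS t).differentiableAt
  have hSc : Continuous S := hSd.continuous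
  have hEc : Continuous E := Differentiable.continuous (fun t => (hE t).differentiableAt)
  have hIc : ∀ i, Continuous (I i) :=
    fun i => Differentiable.continuous (fun t => (hI i t).differentiableAt)
  -- force of infection
  set g : ℝ → ℝ := fun t => (∑ i, β i t * I i t) * S t with hgdef
  have hgc : Continuous g :=
    (continuous_finset_sum _ fun i _ => (hβcont i).mul (hIc i)).mul hSc
  have hgnn : ∀ t, 0 ≤ g t := fun t =>
    mul_nonneg (Finset.sum_nonneg fun i _ => mul_nonneg (hβnn i t) (hInn i t)) (hSnn t)
  have hSder : ∀ t, HasDerivAt S (-(g t)) t := by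
    intro t
    simpa [hgdef, neg_mul] using hS t
  -- S is antitone, converges to its infimum
  have hAnti : Antitone S := by
    apply antitone_of_deriv_nonpos hSd
    intro t
    rw [(hSder t).deriv]
    simpa using hgnn t
  have hbdd : BddBelow (Set.range S) := ⟨0, by rintro y ⟨t, rfl⟩; exact hSnn t⟩
  refine ⟨⨅ t, S t, tendsto_atTop_ciInf hAnti hbdd, ?_⟩
  have hSlim : Tendsto S atTop (𝓝 (⨅ t, S t)) := tendsto_atTop_ciInf hAnti hbdd
  by_contra hcon
  push_neg at hcon
  have hSge : ∀ t, S0 ≤ S t := fun t => le_trans hcon (ciInf_le hbdd t)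
  -- coefficients c i
  set c : Fin N → ℝ := fun i => β0 i * S0 / γ i with hcdef
  have hcpos : ∀ i, 0 < c i := fun i => div_pos (mul_pos (hβ0 i) hS0) (hγ i)
  have hcγ : ∀ i, c i * γ i = β0 i * S0 := fun i => div_mul_cancel₀ _ (hγ i).ne'
  have hcx : ∑ i, c i * x i = 1 := by
    have h1 : ∀ i ∈ Finset.univ, c i * x i = S0 * (x i * β0 i / γ i) :=
      fun i _ => by rw [hcdef]; ring
    rw [Finset.sum_congr rfl h1, ← Finset.mul_sum, hS0def, inv_mul_cancel₀ hQpos.ne']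
  -- weighted infectious burden h
  set h : ℝ → ℝ := fun t => ∑ i, β0 i * I i t with hhdef
  have hhc : Continuous h := continuous_finset_sum _ fun i _ => continuous_const.mul (hIc i)
  have hhnn : ∀ t, 0 ≤ h t := fun t =>
    Finset.sum_nonneg fun i _ => mul_nonneg (hβ0 i).le (hInn i t)
  have hgt : ∀ t, tF ≤ t → g t = h t * S t := by
    intro t ht
    have hsum : (∑ i, β i t * I i t) = ∑ i, β0 i * I i t :=
      Finset.sum_congr rfl fun i _ => by rw [hfin i t ht]
    simp only [hgdef, hhdef, hsum]
  -- L and its derivative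
  set L : ℝ → ℝ := fun t => E t + ∑ i, c i * I i t with hLdef
  set L' : ℝ → ℝ := fun t => (g t - σ * E t) + ∑ i, c i * (x i * σ * E t - γ i * I i t)
    with hL'def
  have hLd : ∀ t, HasDerivAt L (L' t) t := by
    intro t
    exact (hE t).add (HasDerivAt.fun_sum fun i _ => (hI i t).const_mul (c i))
  have hL'c : Continuous L' := by
    apply (hgc.sub (continuous_const.mul hEc)).add
    apply continuous_finset_sum
    intro i _
    exact continuous_const.mul ((continuous_const.mul hEc).sub (continuous_const.mul (hIc i)))
  have hL'eq : ∀ t, tF ≤ t → L' t = h t * (S t - S0) := by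
    intro t ht
    have h2 : ∀ i ∈ Finset.univ, c i * (x i * σ * E t - γ i * I i t)
        = σ * E t * (c i * x i) - S0 * (β0 i * I i t) := by
      intro i _
      linear_combination (-(I i t)) * hcγ i
    rw [hL'def]
    simp only
    rw [Finset.sum_congr rfl h2, Finset.sum_sub_distrib, ← Finset.mul_sum, ← Finset.mul_sum,
      hcx, hgt t ht, hhdef]
    ring
  have hΦ'eq : ∀ t, tF ≤ t → -(g t) + L' t = -(S0 * h t) := by
    intro t ht
    rw [hL'eq t ht, hgt t ht]
    ring
  -- identity for S : ∫ g = S tF - S t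
  have hSint : ∀ t, ∫ s in tF..t, g s = S tF - S t := by
    intro t
    have hgeq := ftc' hSder hgc.neg tF t
    rw [intervalIntegral.integral_neg] at hgeq
    linarith
  -- identity for E
  have hEid : ∀ t, E t = E tF + (S tF - S t) - σ * ∫ s in tF..t, E s := by
    intro t
    have h1 := ftc' hE (hgc.sub (continuous_const.mul hEc)) tF t
    rw [intervalIntegral.integral_sub (hgc.intervalIntegrable tF t)
      ((continuous_const.fun_mul hEc).intervalIntegrable tF t),
      intervalIntegral.integral_const_mul, hSint t] at h1
    linarith
  -- identity for I i
  have hIid : ∀ i t, I i t = I i tF + x i * σ * (∫ s in tF..t, E s)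
      - γ i * ∫ s in tF..t, I i s := by
    intro i t
    have hcont : Continuous (fun s => x i * σ * E s - γ i * I i s) :=
      ((continuous_const.mul hEc)).sub (continuous_const.mul (hIc i))
    have h1 := ftc' (hI i) hcont tF t
    rw [intervalIntegral.integral_sub
        (((continuous_const.fun_mul hEc)).intervalIntegrable tF t)
        ((continuous_const.fun_mul (hIc i)).intervalIntegrable tF t),
      intervalIntegral.integral_const_mul, intervalIntegral.integral_const_mul] at h1
    linarith
  -- identity for Φ = S + L, for t ≥ tF
  have hΦid : ∀ t, tF ≤ t →
      S t + L t = S tF + L tF - S0 * ∑ i, β0 i * ∫ s in tF..t, I i s := by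
    intro t ht
    have hΦd : ∀ u, HasDerivAt (fun s => S s + L s) (-(g u) + L' u) u :=
      fun u => (hSder u).add (hLd u)
    have h1 := ftc' hΦd (hgc.neg.add hL'c) tF t
    have h2 : ∫ u in tF..t, (-(g u) + L' u) = ∫ u in tF..t, -(S0 * h u) := by
      apply intervalIntegral.integral_congr
      intro u hu
      rw [Set.uIcc_of_le ht] at hu
      exact hΦ'eq u hu.1
    have h3 : ∫ u in tF..t, -(S0 * h u) = -(S0 * ∑ i, β0 i * ∫ s in tF..t, I i s) := by
      rw [intervalIntegral.integral_neg, intervalIntegral.integral_const_mul]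
      congr 2
      rw [hhdef]
      simp only
      rw [intervalIntegral.integral_finset_sum
        (fun i _ => (continuous_const.fun_mul (hIc i)).intervalIntegrable tF t)]
      exact Finset.sum_congr rfl fun i _ => intervalIntegral.integral_const_mul _ _
    rw [h2, h3] at h1
    linarith
  -- nonnegativity facts
  have hGnn : ∀ i t, tF ≤ t → 0 ≤ ∫ s in tF..t, I i s := fun i t ht =>
    intervalIntegral.integral_nonneg ht fun u _ => hInn i u
  have hLnn : ∀ t, 0 ≤ L t := fun t =>
    add_nonneg (hEnn t) (Finset.sum_nonneg fun i _ => mul_nonneg (hcpos i).le (hInn i t))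
  have hΦtFnn : 0 ≤ S tF + L tF := add_nonneg (hSnn tF) (hLnn tF)
  -- bound on the integrals of I i
  have hGmono : ∀ i, Monotone (fun t => ∫ s in tF..t, I i s) :=
    fun i => mono_int (hIc i) (hInn i) tF
  have hGbd : ∀ i t, (∫ s in tF..t, I i s) ≤ (S tF + L tF) / (S0 * β0 i) := by
    intro i t
    have hdpos : 0 < S0 * β0 i := mul_pos hS0 (hβ0 i)
    rcases le_total t tF with htle | htge
    · have h1 := hGmono i htle
      simp only at h1
      rw [intervalIntegral.integral_same] at h1
      have hd : 0 ≤ (S tF + L tF) / (S0 * β0 i) := div_nonneg hΦtFnn hdpos.le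
      linarith
    · have h1 := hΦid t htge
      have h2 : 0 ≤ S t + L t := add_nonneg (hSnn t) (hLnn t)
      have h3 : S0 * ∑ j, β0 j * ∫ s in tF..t, I j s ≤ S tF + L tF := by linarith
      have h4 : β0 i * (∫ s in tF..t, I i s) ≤ ∑ j, β0 j * ∫ s in tF..t, I j s :=
        Finset.single_le_sum (fun j _ => mul_nonneg (hβ0 j).le (hGnn j t htge))
          (Finset.mem_univ i)
      have h5 : S0 * (β0 i * ∫ s in tF..t, I i s) ≤ S tF + L tF :=
        le_trans (mul_le_mul_of_nonneg_left h4 hS0.le) h3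
      rw [le_div_iff₀ hdpos]
      nlinarith [h5]
  -- Φ is bounded by its initial value for t ≥ tF
  have hΦle : ∀ t, tF ≤ t → S t + L t ≤ S tF + L tF := by
    intro t ht
    have h1 := hΦid t ht
    have h2 : 0 ≤ ∑ j, β0 j * ∫ s in tF..t, I j s :=
      Finset.sum_nonneg fun j _ => mul_nonneg (hβ0 j).le (hGnn j t ht)
    nlinarith
  -- bound on the integral of E via component i0
  set i0 : Fin N := ⟨0, hN⟩ with hi0
  set CE : ℝ := ((S tF + L tF) / c i0 + γ i0 * ((S tF + L tF) / (S0 * β0 i0))) / (x i0 * σ)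
    with hCE
  have hFbd : ∀ t, (∫ s in tF..t, E s) ≤ CE := by
    intro t
    have hxσ : 0 < x i0 * σ := mul_pos (hx i0) hσ
    have hA : 0 ≤ (S tF + L tF) / c i0 := div_nonneg hΦtFnn (hcpos i0).le
    have hB : 0 ≤ γ i0 * ((S tF + L tF) / (S0 * β0 i0)) :=
      mul_nonneg (hγ i0).le (div_nonneg hΦtFnn (mul_pos hS0 (hβ0 i0)).le)
    have hCEnn : 0 ≤ CE := by
      rw [hCE]; exact div_nonneg (by linarith) hxσ.le
    rcases le_total t tF with htle | htge
    · have h1 := mono_int hEc hEnn tF htle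
      simp only at h1
      rw [intervalIntegral.integral_same] at h1
      linarith
    · have hIbd : I i0 t ≤ (S tF + L tF) / c i0 := by
        have h1 : c i0 * I i0 t ≤ ∑ j, c j * I j t :=
          Finset.single_le_sum (fun j _ => mul_nonneg (hcpos j).le (hInn j t))
            (Finset.mem_univ i0)
        have h2 := hΦle t htge
        simp only [hLdef] at h2
        have h3 : c i0 * I i0 t ≤ S tF + L tF := by
          have := hSnn t; have := hEnn t
          simp only [hLdef]
          linarith
        rw [le_div_iff₀ (hcpos i0)]
        nlinarith [h3]
      have h6 := hIid i0 t
      have h7 : γ i0 * (∫ s in tF..t, I i0 s) ≤ γ i0 * ((S tF + L tF) / (S0 * β0 i0)) :=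
        mul_le_mul_of_nonneg_left (hGbd i0 t) (hγ i0).le
      have h8 : x i0 * σ * (∫ s in tF..t, E s)
          ≤ (S tF + L tF) / c i0 + γ i0 * ((S tF + L tF) / (S0 * β0 i0)) := by
        have := hInn i0 tF
        linarith
      rw [hCE, le_div_iff₀ hxσ]
      nlinarith [h8]
  -- limits of the integral functions
  have hFlim : Tendsto (fun t => ∫ s in tF..t, E s) atTop
      (𝓝 (⨆ t, ∫ s in tF..t, E s)) :=
    tendsto_atTop_ciSup (mono_int hEc hEnn tF) ⟨CE, by rintro y ⟨t, rfl⟩; exact hFbd t⟩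
  have hGlim : ∀ i, Tendsto (fun t => ∫ s in tF..t, I i s) atTop
      (𝓝 (⨆ t, ∫ s in tF..t, I i s)) :=
    fun i => tendsto_atTop_ciSup (hGmono i)
      ⟨(S tF + L tF) / (S0 * β0 i), by rintro y ⟨t, rfl⟩; exact hGbd i t⟩
  -- E tends to 0
  have hElim0 : Tendsto E atTop
      (𝓝 (E tF + (S tF - ⨅ t, S t) - σ * ⨆ t, ∫ s in tF..t, E s)) := by
    have h1 : Tendsto (fun t => E tF + (S tF - S t) - σ * ∫ s in tF..t, E s) atTop
        (𝓝 (E tF + (S tF - ⨅ t, S t) - σ * ⨆ t, ∫ s in tF..t, E s)) :=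
      ((tendsto_const_nhds.sub hSlim).const_add (E tF)).sub (hFlim.const_mul σ)
    exact h1.congr fun t => (hEid t).symm
  have hEzero : Tendsto E atTop (𝓝 0) := by
    have := lim_zero hEc hEnn hFbd hElim0
    rwa [this] at hElim0
  -- each I i tends to 0
  have hIzero : ∀ i, Tendsto (I i) atTop (𝓝 0) := by
    intro i
    have hlim : Tendsto (I i) atTop
        (𝓝 (I i tF + x i * σ * (⨆ t, ∫ s in tF..t, E s)
          - γ i * ⨆ t, ∫ s in tF..t, I i s)) := by
      have h1 : Tendsto (fun t => I i tF + x i * σ * (∫ s in tF..t, E s)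
          - γ i * ∫ s in tF..t, I i s) atTop
          (𝓝 (I i tF + x i * σ * (⨆ t, ∫ s in tF..t, E s)
            - γ i * ⨆ t, ∫ s in tF..t, I i s)) :=
        ((hFlim.const_mul (x i * σ)).const_add (I i tF)).sub ((hGlim i).const_mul (γ i))
      exact h1.congr fun t => (hIid i t).symm
    have := lim_zero (hIc i) (hInn i) (hGbd i) hlim
    rwa [this] at hlim
  -- L tends to 0
  have hLlim : Tendsto L atTop (𝓝 0) := by
    have hsum : Tendsto (fun t => ∑ i, c i * I i t) atTop (𝓝 (∑ i : Fin N, c i * 0)) :=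
      tendsto_finset_sum _ fun i _ => (hIzero i).const_mul (c i)
    have h1 := hEzero.add hsum
    simpa using h1
  -- L is nondecreasing past tF
  have hLge : ∀ t, tF ≤ t → L tF ≤ L t := by
    intro t ht
    have h1 := ftc' hLd hL'c tF t
    have h2 : 0 ≤ ∫ u in tF..t, L' u := by
      apply intervalIntegral.integral_nonneg ht
      intro u hu
      rw [hL'eq u hu.1]
      have := hSge u
      exact mul_nonneg (hhnn u) (by linarith)
    linarith
  -- L tF > 0
  have hLpos : 0 < L tF := by
    rcases lt_or_eq_of_le (hEnn tF) with hE' | hE'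
    · have h1 : 0 ≤ ∑ i, c i * I i tF :=
        Finset.sum_nonneg fun i _ => mul_nonneg (hcpos i).le (hInn i tF)
      rw [hLdef]; simp only; linarith
    · have hsum : 0 < ∑ i, I i tF := by
        have h0 := hpos
        rw [← hE'] at h0
        linarith
      have h1 : ∑ _i : Fin N, (0:ℝ) < ∑ i, I i tF := by simpa using hsum
      obtain ⟨i, _, hi⟩ := Finset.exists_lt_of_sum_lt h1
      have h2 : c i * I i tF ≤ ∑ j, c j * I j tF :=
        Finset.single_le_sum (fun j _ => mul_nonneg (hcpos j).le (hInn j tF))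
          (Finset.mem_univ i)
      have h3 : 0 < c i * I i tF := mul_pos (hcpos i) hi
      rw [hLdef]; simp only
      linarith [hEnn tF]
  -- contradiction
  have hfinal : L tF ≤ 0 :=
    ge_of_tendsto hLlim (eventually_atTop.mpr ⟨tF, fun t ht => hLge t ht⟩)
  linarith
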